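/- arXiv:2106.12784 — 3 statements merged into one kernel-verified Lean document; each statement's English description precedes it below -/
import Mathlib

section
/- Let μ be a Borel probability measure on ℝ with continuous cumulative distribution function F, having finite first moment E_F = ∫ z dμ(z). Let θ, δ₀ ∈ ℝ, δ₁ > 0, and let Y be a real-valued random variable with P(Y > y) = F(θ − δ₀ − δ₁·y) for all y ∈ ℝ. Then Y is integrable and E(Y) = (θ − δ₀ − E_F)/δ₁. -/
open MeasureTheory Set

/-- In the linear thresholds model with continuous response function `F`
(the CDF of a probability measure `μ` with finite first moment `E_F`), the response `Y`
is integrable with `E(Y) = (θ - δ₀ - E_F) / δ₁`. -/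
theorem thresholds_linear_expectation
    {Ω : Type*} [MeasurableSpace Ω] (P : Measure Ω) [IsProbabilityMeasure P]
    (μ : Measure ℝ) [IsProbabilityMeasure μ]
    (F : ℝ → ℝ) (hF : ∀ t : ℝ, F t = (μ (Iic t)).toReal) (hFcont : Continuous F)
    (hμint : Integrable (fun z : ℝ => z) μ)
    (θ δ₀ δ₁ : ℝ) (hδ₁ : 0 < δ₁)
    (Y : Ω → ℝ) (hYm : Measurable Y)
    (hY : ∀ y : ℝ, (P {ω | y < Y ω}).toReal = F (θ - δ₀ - δ₁ * y)) :
    Integrable Y P ∧ ∫ ω, Y ω ∂P = (θ - δ₀ - ∫ z, z ∂μ) / δ₁ := by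
  -- μ (Iio c) has toReal F c
  have hIio : ∀ c : ℝ, (μ (Iio c)).toReal = F c := by
    intro c
    refine le_antisymm ?_ ?_
    · calc (μ (Iio c)).toReal ≤ (μ (Iic c)).toReal :=
            ENNReal.toReal_mono (measure_ne_top μ _) (measure_mono Iio_subset_Iic_self)
        _ = F c := (hF c).symm
    · have hlim : Filter.Tendsto (fun n : ℕ => F (c - 1 / (n + 1))) Filter.atTop (nhds (F c)) := by
        have : Filter.Tendsto (fun n : ℕ => c - 1 / (n + 1)) Filter.atTop (nhds c) := by
          have := tendsto_one_div_add_atTop_nhds_zero_nat (𝕜 := ℝ)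
          simpa using (tendsto_const_nhds (x := c)).sub this
        exact (hFcont.tendsto c).comp this
      refine le_of_tendsto hlim (Filter.Eventually.of_forall fun n => ?_)
      rw [hF]
      refine ENNReal.toReal_mono (measure_ne_top μ _) (measure_mono ?_)
      refine Iic_subset_Iio.mpr ?_
      have : (0 : ℝ) < 1 / (n + 1) := by positivity
      linarith
  set T : ℝ → ℝ := fun z => (θ - δ₀ - z) / δ₁ with hT
  have hTm : Measurable T := by fun_prop
  have hmap : Measure.map Y P = Measure.map T μ := by
    refine Measure.ext_of_Iic _ _ fun y => ?_
    rw [Measure.map_apply hYm measurableSet_Iic, Measure.map_apply hTm measurableSet_Iic]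
    have h1 : Y ⁻¹' Iic y = {ω | y < Y ω}ᶜ := by
      ext ω; simp [not_lt]
    have h2 : T ⁻¹' Iic y = (Iio (θ - δ₀ - δ₁ * y))ᶜ := by
      ext z
      simp only [hT, mem_preimage, mem_Iic, mem_compl_iff, mem_Iio, not_lt]
      rw [div_le_iff₀ hδ₁]
      constructor <;> intro h <;> linarith
    have hmeas : MeasurableSet {ω | y < Y ω} := hYm measurableSet_Ioi
    rw [h1, h2, measure_compl hmeas (measure_ne_top _ _),
        measure_compl measurableSet_Iio (measure_ne_top _ _)]
    congr 1
    · simp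
    · refine (ENNReal.toReal_eq_toReal_iff' (measure_ne_top _ _) (measure_ne_top _ _)).mp ?_
      rw [hY y, hIio]
  have hTint : Integrable T μ := ((integrable_const (θ - δ₀)).sub hμint).div_const δ₁
  have hid : Integrable (fun x : ℝ => x) (Measure.map Y P) := by
    rw [hmap]
    exact (integrable_map_measure aestronglyMeasurable_id hTm.aemeasurable).mpr hTint
  have hYint : Integrable Y P :=
    (integrable_map_measure aestronglyMeasurable_id hYm.aemeasurable).mp hid
  refine ⟨hYint, ?_⟩
  have : ∫ ω, Y ω ∂P = ∫ z, T z ∂μ := by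
    have e1 : ∫ ω, Y ω ∂P = ∫ x, x ∂(Measure.map Y P) :=
      (integral_map hYm.aemeasurable aestronglyMeasurable_id).symm
    have e2 : ∫ x, x ∂(Measure.map T μ) = ∫ z, T z ∂μ :=
      integral_map hTm.aemeasurable aestronglyMeasurable_id
    rw [e1, hmap, e2]
  rw [this, hT]
  simp only [integral_div]
  rw [integral_sub (integrable_const _) hμint, integral_const]
  simp
end

section
/- Let μ be a Borel probability measure on ℝ with continuous cumulative distribution function F and finite second moment, with mean E_F and variance var_F. Let θ, δ₀ ∈ ℝ, δ₁ > 0, and let Y be a real-valued random variable with P(Y > y) = F(θ − δ₀ − δ₁·y) for all y ∈ ℝ. Then the error variable E = Y − E(Y) has law equal to the pushforward of μ under z ↦ (E_F − z)/δ₁; in particular, the law of E does not depend on θ or δ₀, E has expectation 0, and Var(E) = var_F/δ₁². This gives the classical-test-theory decomposition Y = E(Y) + E with error-score distribution determined only by F and δ₁. -/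
open MeasureTheory ProbabilityTheory Set Filter Topology

lemma cdf_cont_noatom (μ : Measure ℝ) [IsProbabilityMeasure μ]
    (F : ℝ → ℝ) (hF : ∀ t : ℝ, F t = (μ (Iic t)).toReal) (hFcont : Continuous F)
    (c : ℝ) : μ {c} = 0 := by
  have hle : ∀ t < c, (μ {c}).toReal ≤ F c - F t := by
    intro t ht
    have hsub : {c} ⊆ Ioc t c := by simp [ht]
    have hunion : Iic t ∪ Ioc t c = Iic c := Iic_union_Ioc_eq_Iic ht.le
    have hdisj : Disjoint (Iic t) (Ioc t c) := Iic_disjoint_Ioc le_rfl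
    have hadd : μ (Iic t) + μ (Ioc t c) = μ (Iic c) := by
      rw [← measure_union hdisj measurableSet_Ioc, hunion]
    have h1 : (μ (Iic t)).toReal + (μ (Ioc t c)).toReal = (μ (Iic c)).toReal := by
      rw [← ENNReal.toReal_add (measure_ne_top _ _) (measure_ne_top _ _), hadd]
    have h2 : (μ (Ioc t c)).toReal = F c - F t := by rw [hF, hF]; linarith
    calc (μ {c}).toReal ≤ (μ (Ioc t c)).toReal :=
          ENNReal.toReal_mono (measure_ne_top _ _) (measure_mono hsub)
      _ = F c - F t := h2
  have htend : Tendsto (fun t => F c - F t) (𝓝[<] c) (𝓝 0) := by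
    have h := Tendsto.mono_left ((hFcont.tendsto c).const_sub (F c)) (nhdsWithin_le_nhds (s := Iio c))
    simpa using h
  have hne : (𝓝[<] c).NeBot := nhdsLT_neBot c
  have hlim : (μ {c}).toReal ≤ 0 :=
    ge_of_tendsto htend (eventually_nhdsWithin_of_forall fun t ht => hle t ht)
  have : (μ {c}).toReal = 0 := le_antisymm hlim ENNReal.toReal_nonneg
  exact (ENNReal.toReal_eq_zero_iff _).mp this |>.resolve_right (measure_ne_top _ _)

/-- In the linear thresholds model with continuous response function `F`
(the CDF of a probability measure `μ` with finite second moment, mean `E_F` and variance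
`var_F`), the error variable `E = Y - E(Y)` has law equal to the pushforward of `μ` under
`z ↦ (E_F - z)/δ₁` (hence independent of `θ` and `δ₀`), expectation `0`, and variance
`var_F / δ₁²`: the classical-test-theory decomposition `Y = E(Y) + E`. -/
theorem thresholds_linear_error_decomposition
    {Ω : Type*} [MeasurableSpace Ω] (P : Measure Ω) [IsProbabilityMeasure P]
    (μ : Measure ℝ) [IsProbabilityMeasure μ]
    (F : ℝ → ℝ) (hF : ∀ t : ℝ, F t = (μ (Iic t)).toReal) (hFcont : Continuous F)
    (hμ2 : Integrable (fun z : ℝ => z ^ 2) μ)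
    (θ δ₀ δ₁ : ℝ) (hδ₁ : 0 < δ₁)
    (Y : Ω → ℝ) (hYm : Measurable Y)
    (hY : ∀ y : ℝ, (P {ω | y < Y ω}).toReal = F (θ - δ₀ - δ₁ * y))
    (E : Ω → ℝ) (hE : ∀ ω, E ω = Y ω - ∫ ω', Y ω' ∂P) :
    Measure.map E P = Measure.map (fun z : ℝ => ((∫ w, w ∂μ) - z) / δ₁) μ ∧
      ∫ ω, E ω ∂P = 0 ∧
      variance E P = (∫ z, (z - ∫ w, w ∂μ) ^ 2 ∂μ) / δ₁ ^ 2 := by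
  set EF : ℝ := ∫ w, w ∂μ with hEF
  set g : ℝ → ℝ := fun z => (θ - δ₀ - z) / δ₁ with hg
  have hgm : Measurable g := by fun_prop
  have hatom : ∀ c : ℝ, μ {c} = 0 := cdf_cont_noatom μ F hF hFcont
  have hIio : ∀ c : ℝ, μ (Iio c) = μ (Iic c) := by
    intro c
    have : Iic c = Iio c ∪ {c} := by
      ext x; simp [le_iff_lt_or_eq]
    rw [this, measure_union (by simp) (measurableSet_singleton c), hatom, add_zero]
  -- law of Y
  have hmapY : Measure.map Y P = Measure.map g μ := by
    haveI : IsProbabilityMeasure (Measure.map Y P) := Measure.isProbabilityMeasure_map hYm.aemeasurable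
    haveI : IsProbabilityMeasure (Measure.map g μ) := Measure.isProbabilityMeasure_map hgm.aemeasurable
    refine Measure.ext_of_Iic _ _ fun y => ?_
    set c : ℝ := θ - δ₀ - δ₁ * y with hc
    have hpre : g ⁻¹' (Iic y) = Ici c := by
      ext z
      simp only [mem_preimage, mem_Iic, mem_Ici, hg, hc]
      rw [div_le_iff₀ hδ₁]
      constructor <;> intro h <;> linarith
    have hcomplY : {ω | Y ω ≤ y}ᶜ = {ω | y < Y ω} := by
      ext ω; simp [not_le]
    have hYIic : Measure.map Y P (Iic y) = P {ω | Y ω ≤ y} := by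
      rw [Measure.map_apply hYm measurableSet_Iic]; rfl
    have hgIic : Measure.map g μ (Iic y) = μ (Ici c) := by
      rw [Measure.map_apply hgm measurableSet_Iic, hpre]
    rw [hYIic, hgIic]
    -- compare via toReal
    have hfinY := measure_ne_top P {ω | Y ω ≤ y}
    have hfinμ := measure_ne_top μ (Ici c)
    rw [← ENNReal.toReal_eq_toReal_iff' hfinY hfinμ]
    have hYs : MeasurableSet {ω | Y ω ≤ y} := hYm measurableSet_Iic
    have h1 : (P {ω | Y ω ≤ y}).toReal + (P {ω | y < Y ω}).toReal = 1 := by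
      rw [← ENNReal.toReal_add (measure_ne_top _ _) (measure_ne_top _ _), ← hcomplY,
        measure_add_measure_compl hYs]
      simp
    have h2 : (μ (Iio c)).toReal + (μ (Ici c)).toReal = 1 := by
      rw [← ENNReal.toReal_add (measure_ne_top _ _) (measure_ne_top _ _),
        ← measure_union (Iio_disjoint_Ici le_rfl) measurableSet_Ici, Iio_union_Ici]
      simp
    have h3 : (μ (Iio c)).toReal = F c := by rw [hIio, hF]
    have h4 := hY y
    linarith
  -- integrability of z and g
  have hz2 : MemLp (fun z : ℝ => z) 2 μ :=
    (memLp_two_iff_integrable_sq aestronglyMeasurable_id).mpr hμ2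
  have hz1 : Integrable (fun z : ℝ => z) μ := hz2.integrable one_le_two
  have hgint : Integrable g μ := by
    have : g = fun z => ((θ - δ₀) - z) * (1 / δ₁) := by
      funext z; simp [hg]; ring
    rw [this]
    exact ((integrable_const (θ - δ₀)).sub hz1).mul_const _
  -- mean of Y
  have hYint : Integrable Y P := by
    have h1 : Integrable (fun x : ℝ => x) (Measure.map Y P) := by
      rw [hmapY]
      refine (integrable_map_measure aestronglyMeasurable_id hgm.aemeasurable).mpr ?_
      simpa [Function.comp] using hgint
    have h2 := (integrable_map_measure aestronglyMeasurable_id hYm.aemeasurable).mp h1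
    simpa [Function.comp] using h2
  have hmY : ∫ ω, Y ω ∂P = (θ - δ₀ - EF) / δ₁ := by
    have h1 : ∫ ω, Y ω ∂P = ∫ z, g z ∂μ := by
      have e1 : ∫ x : ℝ, x ∂(Measure.map Y P) = ∫ ω, Y ω ∂P :=
        MeasureTheory.integral_map hYm.aemeasurable aestronglyMeasurable_id
      have e2 : ∫ x : ℝ, x ∂(Measure.map g μ) = ∫ z, g z ∂μ :=
        MeasureTheory.integral_map hgm.aemeasurable aestronglyMeasurable_id
      rw [← e1, hmapY, e2]
    rw [h1, hg]
    simp only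
    rw [integral_div, integral_sub (integrable_const _) hz1, integral_const]
    simp [hEF]
  set m : ℝ := ∫ ω', Y ω' ∂P with hm
  have hEeq : E = fun ω => Y ω - m := funext hE
  set h : ℝ → ℝ := fun z => (EF - z) / δ₁ with hh
  have hhm : Measurable h := by fun_prop
  have hcomp : (fun x : ℝ => x - m) ∘ g = h := by
    funext z
    simp only [Function.comp, hg, hh, hmY, hm]
    rw [div_sub_div_same]
    congr 1
    ring
  have hsubm : Measurable (fun x : ℝ => x - m) := by fun_prop
  have hmapE : Measure.map E P = Measure.map h μ := by
    have e0 : E = (fun x : ℝ => x - m) ∘ Y := by funext ω; simp [hEeq]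
    calc Measure.map E P = Measure.map ((fun x : ℝ => x - m) ∘ Y) P := by rw [e0]
      _ = Measure.map (fun x : ℝ => x - m) (Measure.map Y P) :=
          (Measure.map_map hsubm hYm).symm
      _ = Measure.map (fun x : ℝ => x - m) (Measure.map g μ) := by rw [hmapY]
      _ = Measure.map ((fun x : ℝ => x - m) ∘ g) μ := Measure.map_map hsubm hgm
      _ = Measure.map h μ := by rw [hcomp]
  refine ⟨hmapE, ?_, ?_⟩
  · rw [hEeq]
    rw [integral_sub hYint (integrable_const m), integral_const]
    simp [hm]
  · -- variance
    have hEm : Measurable E := by rw [hEeq]; exact hYm.sub_const m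
    have hhint2 : Integrable (fun z => (h z) ^ 2) μ := by
      have : (fun z => (h z) ^ 2) = fun z => (EF ^ 2 - 2 * EF * z + z ^ 2) * (1 / δ₁ ^ 2) := by
        funext z; simp [hh]; field_simp; ring
      rw [this]
      exact (((integrable_const (EF ^ 2)).sub (hz1.const_mul _)).add hμ2).mul_const _
    have hE2 : MemLp E 2 P := by
      refine (memLp_two_iff_integrable_sq hEm.aestronglyMeasurable).mpr ?_
      have : Integrable (fun x : ℝ => x ^ 2) (Measure.map E P) := by
        rw [hmapE]
        refine (integrable_map_measure (measurable_id.pow_const 2).aestronglyMeasurable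
          hhm.aemeasurable).mpr ?_
        simpa [Function.comp_def] using hhint2
      have := (integrable_map_measure (measurable_id.pow_const 2).aestronglyMeasurable
        hEm.aemeasurable).mp this
      simpa [Function.comp_def] using this
    have hE0 : ∫ ω, E ω ∂P = 0 := by
      rw [hEeq, integral_sub hYint (integrable_const m), integral_const]; simp [hm]
    have hv := variance_of_integral_eq_zero hE2.aestronglyMeasurable.aemeasurable hE0
    rw [hv]
    have h1 : ∫ ω, (E ω) ^ 2 ∂P = ∫ z, (h z) ^ 2 ∂μ := by
      have e1 : ∫ ω, (E ω) ^ 2 ∂P = ∫ x, x ^ 2 ∂(Measure.map E P) :=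
        (MeasureTheory.integral_map hEm.aemeasurable
          (measurable_id.pow_const 2).aestronglyMeasurable).symm
      have e2 : ∫ x : ℝ, x ^ 2 ∂(Measure.map h μ) = ∫ z, (h z) ^ 2 ∂μ :=
        MeasureTheory.integral_map hhm.aemeasurable
          (measurable_id.pow_const 2).aestronglyMeasurable
      rw [e1, hmapE, e2]
    have h2 : ∫ z, (h z) ^ 2 ∂μ = (∫ z, (z - EF) ^ 2 ∂μ) / δ₁ ^ 2 := by
      rw [← integral_div]
      congr 1
      funext z
      simp only [hh]
      rw [div_pow]
      congr 1
      ring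
    calc ∫ ω, (E ω) ^ 2 ∂P = ∫ z, (h z) ^ 2 ∂μ := h1
      _ = (∫ z, (z - EF) ^ 2 ∂μ) / δ₁ ^ 2 := h2
end

section
/- Let F : ℝ → ℝ be strictly monotone (hence injective), let P and I be nonempty index sets, and let S be a nonempty set of thresholds. Let (θ, δ) and (θ̃, δ̃) be two parameterizations, where θ, θ̃ : P → ℝ and δ, δ̃ : I → S → ℝ, such that F(θ_p − δ_i(y)) = F(θ̃_p − δ̃_i(y)) for all p ∈ P, i ∈ I, y ∈ S. If δ_{i₀}(y₀) = δ̃_{i₀}(y₀) for some fixed item i₀ ∈ I and fixed threshold y₀ ∈ S, then θ_p = θ̃_p for all p ∈ P and δ_i(y) = δ̃_i(y) for all i ∈ I and y ∈ S. -/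
/-- Identifiability of the thresholds model after fixing one item difficulty
value: if two parameterizations `(θ, δ)` and `(θ̃, δ̃)` produce the same response
probabilities `F(θ_p - δ_i(y)) = F(θ̃_p - δ̃_i(y))` for a strictly monotone (hence
injective) response function `F`, and `δ_{i₀}(y₀) = δ̃_{i₀}(y₀)` for some fixed item `i₀`
and threshold `y₀`, then the two parameterizations coincide. -/
theorem thresholds_identifiable_fix_difficulty
    {P I S : Type*} [Nonempty P] [Nonempty I] [Nonempty S]
    (F : ℝ → ℝ) (hF : StrictMono F)
    (θ θt : P → ℝ) (δ δt : I → S → ℝ)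
    (h : ∀ (p : P) (i : I) (y : S), F (θ p - δ i y) = F (θt p - δt i y))
    (i₀ : I) (y₀ : S) (h0 : δ i₀ y₀ = δt i₀ y₀) :
    (∀ p : P, θ p = θt p) ∧ ∀ (i : I) (y : S), δ i y = δt i y := by
  have key : ∀ (p : P) (i : I) (y : S), θ p - δ i y = θt p - δt i y :=
    fun p i y => hF.injective (h p i y)
  have hθ : ∀ p : P, θ p = θt p := by
    intro p
    have := key p i₀ y₀
    linarith
  refine ⟨hθ, fun i y => ?_⟩
  obtain ⟨p⟩ := ‹Nonempty P›
  have := key p i y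
  have := hθ p
  linarith
end
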